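/- Let G be a free abelian group and φ an automorphism of G with φ² = id. If φ acts trivially on G/2G, then there is a basis of G in which φ is diagonal with entries ±1; equivalently, G = G⁺ ⊕ G⁻ where G⁺ = {a : φa = a} and G⁻ = {a : φa = -a}. -/
import Mathlib


/-- An involution of a free abelian group acting trivially modulo doubles is diagonalizable:
`G` is the direct sum of the `+1` and `-1` eigensubgroups. -/
theorem stmt_5 (G : Type*) [AddCommGroup G] [Module ℤ G] [Module.Free ℤ G]
    (φ : G ≃ₗ[ℤ] G) (hinv : ∀ a, φ (φ a) = a)
    (htriv : ∀ a : G, ∃ g : G, φ a - a = 2 • g) :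
    ∃ P N : Submodule ℤ G,
      (∀ a, a ∈ P ↔ φ a = a) ∧ (∀ a, a ∈ N ↔ φ a = -a) ∧ IsCompl P N := by
  have key : ∀ x : G, x + x = 0 → x = 0 := by
    intro x hx
    let b := Module.Free.chooseBasis ℤ G
    have h0 : b.repr x = 0 := by
      ext i
      have h1 : b.repr x i + b.repr x i = 0 := by
        have := congrArg (fun y => b.repr y i) hx
        simpa [map_add] using this
      simp only [Finsupp.coe_zero, Pi.zero_apply]
      omega
    exact b.repr.map_eq_zero_iff.mp h0
  refine ⟨LinearMap.ker (φ.toLinearMap - LinearMap.id),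
    LinearMap.ker (φ.toLinearMap + LinearMap.id), ?_, ?_, ?_, ?_⟩
  · intro a
    simp [LinearMap.mem_ker, sub_eq_zero]
  · intro a
    simp [LinearMap.mem_ker, add_eq_zero_iff_eq_neg]
  · -- Disjoint
    rw [Submodule.disjoint_def]
    intro a ha hb
    simp only [LinearMap.mem_ker, LinearMap.sub_apply, LinearMap.add_apply,
      LinearMap.id_coe, id_eq, LinearEquiv.coe_coe, sub_eq_zero,
      add_eq_zero_iff_eq_neg] at ha hb
    refine key a ?_
    nth_rewrite 1 [← ha]
    rw [hb, neg_add_cancel]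
  · -- Codisjoint
    rw [codisjoint_iff, eq_top_iff]
    intro a _
    obtain ⟨g, hg⟩ := htriv a
    rw [two_nsmul] at hg
    have hφg : φ g = -g := by
      have h1 : φ (φ a - a) = a - φ a := by rw [map_sub, hinv]
      rw [hg, map_add] at h1
      have h2 : (φ g + g) + (φ g + g) = 0 := by
        have : φ g + φ g = a - φ a := h1
        have h3 : φ a = a + (g + g) := by rw [← hg]; abel
        rw [h3] at this
        calc (φ g + g) + (φ g + g) = (φ g + φ g) + (g + g) := by abel
          _ = (a - (a + (g + g))) + (g + g) := by rw [this]
          _ = 0 := by abel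
      exact eq_neg_of_add_eq_zero_left (key _ h2)
    have h3 : φ a = a + (g + g) := by rw [← hg]; abel
    have hmem1 : a + g ∈ LinearMap.ker (φ.toLinearMap - LinearMap.id) := by
      simp only [LinearMap.mem_ker, LinearMap.sub_apply, LinearMap.id_coe, id_eq,
        LinearEquiv.coe_coe, sub_eq_zero, map_add, hφg, h3]
      abel
    have hmem2 : -g ∈ LinearMap.ker (φ.toLinearMap + LinearMap.id) := by
      simp only [LinearMap.mem_ker, LinearMap.add_apply, LinearMap.id_coe, id_eq,
        LinearEquiv.coe_coe, map_neg, hφg]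
      abel
    have : a = (a + g) + (-g) := by abel
    rw [this]
    exact Submodule.add_mem_sup hmem1 hmem2
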